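/- arXiv:1812.01086 — 2 statements merged into one kernel-verified Lean document; each statement's English description precedes it below -/
import Mathlib

section
/- With λ defined by the osculating-plane condition, the identity β(i+1/2)·Δ(i+1/2) = λ'(i+1/2)·α(i)·α(i+1) holds, where Δ(i+1/2) = [X(i+2)-X(i+1), X(i+1)-X(i), X(i)-X(i-1)], λ'(i+1/2) = λ(i+1)-λ(i), α(i) = [X(i-1),X(i),X(i+1)], and β(i+1/2) = [X(i),X(i+1),U(i)]. -/
noncomputable def det3 (a b c : Fin 3 → ℝ) : ℝ := Matrix.det (Matrix.of ![a, b, c])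

lemma det3_expand (a b c : Fin 3 → ℝ) :
    det3 a b c = a 0 * (b 1 * c 2 - b 2 * c 1) - a 1 * (b 0 * c 2 - b 2 * c 0)
      + a 2 * (b 0 * c 1 - b 1 * c 0) := by
  simp [det3, Matrix.det_fin_three]; ring

lemma det3_key (a b c d u : Fin 3 → ℝ) :
    det3 b c u * det3 (d - c) (c - b) (b - a) =
      det3 a b c * det3 (d - c) (b - c) u - det3 b c d * det3 (c - b) (a - b) u := by
  simp only [det3_expand, Pi.sub_apply]; ring

/-- β(i+1/2) Δ(i+1/2) = λ'(i+1/2) α(i) α(i+1). -/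
theorem beta_Delta_eq_lambda'_alpha_alpha
    (X U : ℤ → Fin 3 → ℝ) (b lam : ℤ → ℝ)
    (hconv : ∀ j, 0 < det3 (X (j - 1)) (X j) (X (j + 1)))
    (htrans : ∀ j, 0 < det3 (X j) (X (j + 1)) (U j))
    (hpar : ∀ j, U (j + 1) - U j = -b j • (X (j + 1) - X j))
    (hosc : ∀ j, det3 (X (j + 1) - X j) (X (j + 1) - 2 • X j + X (j - 1))
        (-lam j • X j + U j) = 0)
    (i : ℤ) :
    det3 (X i) (X (i + 1)) (U i) *
        det3 (X (i + 2) - X (i + 1)) (X (i + 1) - X i) (X i - X (i - 1)) =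
      (lam (i + 1) - lam i) * det3 (X (i - 1)) (X i) (X (i + 1)) *
        det3 (X i) (X (i + 1)) (X (i + 2)) := by
  have hU : U (i + 1) = U i - b i • (X (i + 1) - X i) := by
    have h := hpar i
    have : U (i + 1) - U i + U i = -b i • (X (i + 1) - X i) + U i := by rw [h]
    simpa [sub_eq_add_neg, add_comm, add_left_comm, neg_smul] using this
  have e1 := hosc i
  have e2 := hosc (i + 1)
  rw [show (i + 1 + 1 : ℤ) = i + 2 by ring, show (i + 1 - 1 : ℤ) = i by ring, hU] at e2
  have h1 : det3 (X (i + 1) - X i) (X (i - 1) - X i) (U i)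
      = lam i * det3 (X (i - 1)) (X i) (X (i + 1)) := by
    simp only [det3_expand, Pi.sub_apply, Pi.add_apply, Pi.smul_apply, Pi.neg_apply,
      smul_eq_mul, nsmul_eq_mul, Nat.cast_ofNat, Pi.mul_apply, Pi.natCast_apply, Pi.ofNat_apply] at e1 ⊢
    linear_combination e1
  have h2 : det3 (X (i + 2) - X (i + 1)) (X i - X (i + 1)) (U i)
      = lam (i + 1) * det3 (X i) (X (i + 1)) (X (i + 2)) := by
    simp only [det3_expand, Pi.sub_apply, Pi.add_apply, Pi.smul_apply, Pi.neg_apply,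
      smul_eq_mul, nsmul_eq_mul, Nat.cast_ofNat, Pi.mul_apply, Pi.natCast_apply, Pi.ofNat_apply] at e2 ⊢
    linear_combination e2
  have key := det3_key (X (i - 1)) (X i) (X (i + 1)) (X (i + 2)) (U i)
  linear_combination key + det3 (X (i - 1)) (X i) (X (i + 1)) * h2
    - det3 (X i) (X (i + 1)) (X (i + 2)) * h1
end

section
/- Four consecutive nodes X(i-1), X(i), X(i+1), X(i+2) of X are coplanar (Δ(i+1/2) = 0) if and only if the three consecutive normal lines of the dual pair (Y,V) at i-1/2, i+1/2, i+3/2 are concurrent, i.e., b(Y,V)(i) = b(Y,V)(i+1). -/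
open Matrix

lemma det3_def (a b c : Fin 3 → ℝ) :
    det3 a b c = a 0 * b 1 * c 2 - a 0 * b 2 * c 1 - a 1 * b 0 * c 2
      + a 1 * b 2 * c 0 + a 2 * b 0 * c 1 - a 2 * b 1 * c 0 := by
  simp [det3, Matrix.det_fin_three]

/-- Cramer-type identity. -/
lemma cramer3 (a b c w y : Fin 3 → ℝ) :
    det3 a b c * (y ⬝ᵥ w) =
      det3 w b c * (y ⬝ᵥ a) + det3 a w c * (y ⬝ᵥ b) + det3 a b w * (y ⬝ᵥ c) := by
  simp only [det3_def, dotProduct, Fin.sum_univ_three]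
  ring

lemma det3_colops (a b c : Fin 3 → ℝ) : det3 a (b - a) (c - b) = det3 a b c := by
  simp only [det3_def, Pi.sub_apply]; ring

lemma det3_colop2 (a b u : Fin 3 → ℝ) : det3 a (b - a) u = det3 a b u := by
  simp only [det3_def, Pi.sub_apply]; ring

lemma keyid (p q r s u : Fin 3 → ℝ) (β : ℝ) :
    det3 (s - r) (r - q) (u + (-β) • (q - p)) * det3 p (q - p) (r - q)
      - det3 (r - q) (q - p) u * det3 q (r - q) (s - r)
    = -(det3 (s - r) (r - q) (q - p) * det3 q (r - q) (u + (-β) • (q - p))) := by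
  simp only [det3_def, Pi.sub_apply, Pi.add_apply, Pi.smul_apply, smul_eq_mul]
  ring

/-- four consecutive nodes of X are coplanar iff the corresponding
three normal lines of the dual pair are concurrent, i.e. b(Y,V)(i) = b(Y,V)(i+1). -/
theorem coplanar_iff_dual_concurrent
    (X U Y V : ℤ → Fin 3 → ℝ) (b bYV : ℤ → ℝ)
    (hconv : ∀ j, 0 < det3 (X (j - 1)) (X j) (X (j + 1)))
    (htrans : ∀ j, 0 < det3 (X j) (X (j + 1)) (U j))
    (hpar : ∀ j, U (j + 1) - U j = -b j • (X (j + 1) - X j))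
    (hY1 : ∀ j, Y j ⬝ᵥ (X (j + 1) - X j) = 0)
    (hY2 : ∀ j, Y j ⬝ᵥ U j = 1)
    (hY3 : ∀ j, Y j ⬝ᵥ X j = 0)
    (hV1 : ∀ j, V j ⬝ᵥ (X (j + 1) - X j) = 0)
    (hV2 : ∀ j, V j ⬝ᵥ U j = 0)
    (hV3 : ∀ j, V j ⬝ᵥ X j = 1)
    (hdualpar : ∀ j, V j - V (j - 1) = -bYV j • (Y j - Y (j - 1)))
    (i : ℤ) :
    det3 (X (i + 2) - X (i + 1)) (X (i + 1) - X i) (X i - X (i - 1)) = 0 ↔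
      bYV i = bYV (i + 1) := by
  have e1i : i - 1 + 1 = i := by ring
  have e2i : i + 1 - 1 = i := by ring
  have e3i : i + 1 + 1 = i + 2 := by ring
  -- basic dot product facts
  have hy1m := hY1 (i - 1); rw [e1i] at hy1m
  have hv1m := hV1 (i - 1); rw [e1i] at hv1m
  have hy1p := hY1 (i + 1); rw [e3i] at hy1p
  have hv1p := hV1 (i + 1); rw [e3i] at hv1p
  have hYm_Xi : Y (i - 1) ⬝ᵥ X i = 0 := by
    have h3 := hY3 (i - 1); rw [dotProduct_sub] at hy1m; linarith
  have hVm_Xi : V (i - 1) ⬝ᵥ X i = 1 := by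
    have h3 := hV3 (i - 1); rw [dotProduct_sub] at hv1m; linarith
  have hYi_Xip1 : Y i ⬝ᵥ X (i + 1) = 0 := by
    have h1 := hY1 i; have h3 := hY3 i; rw [dotProduct_sub] at h1; linarith
  have hVi_Xip1 : V i ⬝ᵥ X (i + 1) = 1 := by
    have h1 := hV1 i; have h3 := hV3 i; rw [dotProduct_sub] at h1; linarith
  have hYp_Xip2 : Y (i + 1) ⬝ᵥ X (i + 2) = 0 := by
    have h3 := hY3 (i + 1); rw [dotProduct_sub] at hy1p; linarith
  have hVp_Xip2 : V (i + 1) ⬝ᵥ X (i + 2) = 1 := by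
    have h3 := hV3 (i + 1); rw [dotProduct_sub] at hv1p; linarith
  -- dual parallel relations, dotted with X(i+1) resp. X(i+2)
  have hd := congrArg (fun v => v ⬝ᵥ X (i + 1)) (hdualpar i)
  simp only [sub_dotProduct, smul_dotProduct, smul_eq_mul] at hd
  rw [hVi_Xip1, hYi_Xip1] at hd
  have hd2 := congrArg (fun v => v ⬝ᵥ X (i + 2)) (hdualpar (i + 1))
  rw [e2i] at hd2
  simp only [sub_dotProduct, smul_dotProduct, smul_eq_mul] at hd2
  rw [hVp_Xip2, hYp_Xip2] at hd2
  -- Cramer relations at level i-1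
  have hcY := cramer3 (X (i - 1)) (X i - X (i - 1)) (U (i - 1)) (X (i + 1) - X i) (Y (i - 1))
  rw [hY3 (i - 1), hy1m, hY2 (i - 1), dotProduct_sub, hYm_Xi, sub_zero] at hcY
  have hcV := cramer3 (X (i - 1)) (X i - X (i - 1)) (U (i - 1)) (X (i + 1) - X i) (V (i - 1))
  rw [hV3 (i - 1), hv1m, hV2 (i - 1), dotProduct_sub, hVm_Xi] at hcV
  -- Cramer relations at level i
  have hcY2 := cramer3 (X i) (X (i + 1) - X i) (U i) (X (i + 2) - X (i + 1)) (Y i)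
  rw [hY3 i, hY1 i, hY2 i, dotProduct_sub, hYi_Xip1, sub_zero] at hcY2
  have hcV2 := cramer3 (X i) (X (i + 1) - X i) (U i) (X (i + 2) - X (i + 1)) (V i)
  rw [hV3 i, hV1 i, hV2 i, dotProduct_sub, hVi_Xip1] at hcV2
  -- key scalar equations for bYV
  have key1 : bYV i * det3 (X (i - 1)) (X i - X (i - 1)) (X (i + 1) - X i)
      = -det3 (X (i + 1) - X i) (X i - X (i - 1)) (U (i - 1)) := by
    linear_combination (-(bYV i)) * hcY - hcV
      - det3 (X (i - 1)) (X i - X (i - 1)) (U (i - 1)) * hd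
  have key2 : bYV (i + 1) * det3 (X i) (X (i + 1) - X i) (X (i + 2) - X (i + 1))
      = -det3 (X (i + 2) - X (i + 1)) (X (i + 1) - X i) (U i) := by
    linear_combination (-(bYV (i + 1))) * hcY2 - hcV2
      - det3 (X i) (X (i + 1) - X i) (U i) * hd2
  -- the determinant identity, using parallelism of U
  have hUi : U i = U (i - 1) + (-b (i - 1)) • (X i - X (i - 1)) := by
    have h := hpar (i - 1); rw [e1i] at h
    have := eq_add_of_sub_eq h
    rw [this]; ring_nf
  have ID := keyid (X (i - 1)) (X i) (X (i + 1)) (X (i + 2)) (U (i - 1)) (b (i - 1))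
  rw [← hUi] at ID
  -- positivity
  have hCpos : 0 < det3 (X (i - 1)) (X i - X (i - 1)) (X (i + 1) - X i) := by
    rw [det3_colops]; exact hconv i
  have hC'pos : 0 < det3 (X i) (X (i + 1) - X i) (X (i + 2) - X (i + 1)) := by
    rw [det3_colops]
    have h := hconv (i + 1); rw [e2i, e3i] at h; exact h
  have hD'pos : 0 < det3 (X i) (X (i + 1) - X i) (U i) := by
    rw [det3_colop2]; exact htrans i
  set C := det3 (X (i - 1)) (X i - X (i - 1)) (X (i + 1) - X i) with hCdef
  set C' := det3 (X i) (X (i + 1) - X i) (X (i + 2) - X (i + 1)) with hC'def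
  set D' := det3 (X i) (X (i + 1) - X i) (U i) with hD'def
  constructor
  · intro hT
    have ID0 : det3 (X (i + 2) - X (i + 1)) (X (i + 1) - X i) (U i) * C
        = det3 (X (i + 1) - X i) (X i - X (i - 1)) (U (i - 1)) * C' := by
      linear_combination ID - D' * hT
    have hzero : (bYV i - bYV (i + 1)) * (C * C') = 0 := by
      linear_combination C' * key1 - C * key2 + ID0
    have hCC' : C * C' ≠ 0 := ne_of_gt (mul_pos hCpos hC'pos)
    have := (mul_eq_zero.mp hzero).resolve_right hCC'
    linarith
  · intro hb
    have hz : det3 (X (i + 2) - X (i + 1)) (X (i + 1) - X i) (X i - X (i - 1)) * D' = 0 := by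
      linear_combination ID + C' * key1 - C * key2 - (C * C') * hb
    exact (mul_eq_zero.mp hz).resolve_right (ne_of_gt hD'pos)
end
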